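/- arXiv:2504.03339 — 3 statements merged into one kernel-verified Lean document; each statement's English description precedes it below -/
import Mathlib

section
/- Let D ⊂ ℝ^{n−k} be measurable with λₖ(C) > 0 for a measurable C ⊂ ℝᵏ, both of finite measure. If limsup_{r→0+} (1/r) λ_{n−k}((D ⊕ rB^{n−k}) \ D) = ∞, then the set A = C × D ⊂ ℝⁿ satisfies limsup_{r→0+} (1/r) λₙ((A ⊕ rBⁿ) \ A) = ∞. -/
open Pointwise MeasureTheory Filter

/-- The closed Euclidean unit ball of the product `ℝᵏ × ℝᵐ` (with the Euclidean norm,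
i.e. `‖p.1‖² + ‖p.2‖² ≤ 1`). -/
def euclideanProdBall (k m : ℕ) :
    Set (EuclideanSpace ℝ (Fin k) × EuclideanSpace ℝ (Fin m)) :=
  {p | ‖p.1‖ ^ 2 + ‖p.2‖ ^ 2 ≤ 1}

theorem stmt8 {k m : ℕ} (C : Set (EuclideanSpace ℝ (Fin k)))
    (D : Set (EuclideanSpace ℝ (Fin m)))
    (hC : MeasurableSet C) (hD : MeasurableSet D)
    (hC0 : 0 < volume C) (hCfin : volume C < ⊤) (hDfin : volume D < ⊤)
    (hlimsup : limsup
      (fun r : ℝ =>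
        volume ((D + r • Metric.closedBall (0 : EuclideanSpace ℝ (Fin m)) 1) \ D) /
          ENNReal.ofReal r)
      (nhdsWithin 0 (Set.Ioi 0)) = ⊤) :
    limsup
      (fun r : ℝ =>
        volume (((C ×ˢ D) + r • euclideanProdBall k m) \ (C ×ˢ D)) / ENNReal.ofReal r)
      (nhdsWithin 0 (Set.Ioi 0)) = ⊤ := by
  set c := volume C with hc
  set f := fun r : ℝ =>
    volume ((D + r • Metric.closedBall (0 : EuclideanSpace ℝ (Fin m)) 1) \ D) /
      ENNReal.ofReal r with hf
  set g := fun r : ℝ =>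
    volume (((C ×ˢ D) + r • euclideanProdBall k m) \ (C ×ˢ D)) / ENNReal.ofReal r with hg
  have hc0 : c ≠ 0 := hC0.ne'
  have hct : c ≠ ⊤ := hCfin.ne
  -- pointwise bound: c * f r ≤ g r for all r
  have key : ∀ r : ℝ, c * f r ≤ g r := by
    intro r
    have hincl :
        C ×ˢ ((D + r • Metric.closedBall (0 : EuclideanSpace ℝ (Fin m)) 1) \ D) ⊆
          ((C ×ˢ D) + r • euclideanProdBall k m) \ (C ×ˢ D) := by
      rintro ⟨x, y⟩ ⟨hx, hy1, hy2⟩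
      constructor
      · obtain ⟨d, hd, b, hb, hdb⟩ := hy1
        obtain ⟨b', hb', rfl⟩ := hb
        simp only at hdb
        refine ⟨(x, d), ⟨hx, hd⟩, r • (0, b'), Set.smul_mem_smul_set ?_, ?_⟩
        · simp only [euclideanProdBall, Set.mem_setOf_eq, norm_zero]
          have : ‖b'‖ ≤ 1 := by simpa using hb'
          nlinarith [norm_nonneg b']
        · simp [Prod.ext_iff, hdb]
      · intro h
        exact hy2 h.2
    have hvol : c * volume ((D + r • Metric.closedBall (0 : EuclideanSpace ℝ (Fin m)) 1) \ D)
        ≤ volume (((C ×ˢ D) + r • euclideanProdBall k m) \ (C ×ˢ D)) := by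
      calc c * volume ((D + r • Metric.closedBall (0 : EuclideanSpace ℝ (Fin m)) 1) \ D)
          = volume (C ×ˢ ((D + r • Metric.closedBall (0 : EuclideanSpace ℝ (Fin m)) 1) \ D)) := by
            rw [Measure.volume_eq_prod, Measure.prod_prod]
        _ ≤ _ := measure_mono hincl
    calc c * f r = c * volume ((D + r • Metric.closedBall (0 : EuclideanSpace ℝ (Fin m)) 1) \ D)
          / ENNReal.ofReal r := by rw [hf, mul_div_assoc]
      _ ≤ g r := ENNReal.div_le_div_right hvol _
  -- hence f r ≤ c⁻¹ * g r
  have key2 : ∀ r : ℝ, f r ≤ c⁻¹ * g r := by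
    intro r
    have hcancel : c⁻¹ * (c * f r) = f r := by
      rw [← mul_assoc, ENNReal.inv_mul_cancel hc0 hct, one_mul]
    rw [← hcancel]
    exact mul_le_mul_right (key r) _
  have h1 : (⊤ : ENNReal) ≤ limsup (fun r => c⁻¹ * g r) (nhdsWithin 0 (Set.Ioi 0)) := by
    rw [← hlimsup]
    exact limsup_le_limsup (Eventually.of_forall key2)
  rw [ENNReal.limsup_const_mul_of_ne_top (ENNReal.inv_ne_top.2 hc0)] at h1
  have := top_le_iff.1 h1
  rcases ENNReal.mul_eq_top.1 this with ⟨_, h⟩ | ⟨h, _⟩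
  · exact h
  · exact absurd h (ENNReal.inv_ne_top.2 hc0)
end

section
/- For ρ > 0 and r > 0, the Lebesgue volume in ℝ³ of ((ρB³) ⊕ (rB²)) \ (ρB³) equals π²ρ²r + 2πρr², where B³ is the closed unit ball of ℝ³, B² is a two-dimensional closed unit disk through the origin in ℝ³, and ⊕ is Minkowski addition. -/
open Pointwise MeasureTheory Real

open Metric Module
open scoped InnerProductSpace

set_option maxHeartbeats 1000000

local notation "E3" => EuclideanSpace ℝ (Fin 3)

private lemma sliceVol14 (R : ℝ) (hR : 0 ≤ R) :
    volume {u : Fin 2 → ℝ | (u 0)^2 + (u 1)^2 ≤ R^2} = ENNReal.ofReal (π * R^2) := by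
  have hmp := (EuclideanSpace.volume_preserving_symm_measurableEquiv_toLp (Fin 2)).symm
  have hset : {u : Fin 2 → ℝ | (u 0)^2 + (u 1)^2 ≤ R^2}
      = (MeasurableEquiv.toLp 2 (Fin 2 → ℝ)).symm.symm ⁻¹' closedBall 0 R := by
    ext u
    simp only [Set.mem_setOf_eq, Set.mem_preimage, mem_closedBall, dist_zero_right]
    rw [EuclideanSpace.norm_eq, Real.sqrt_le_iff]
    have : ∀ i, ‖(MeasurableEquiv.toLp 2 (Fin 2 → ℝ)).symm.symm u i‖ = ‖u i‖ := fun i => rfl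
    simp only [this, Fin.sum_univ_two, Real.norm_eq_abs, sq_abs]
    tauto
  rw [hset, hmp.measure_preimage measurableSet_closedBall.nullMeasurableSet,
    EuclideanSpace.volume_closedBall]
  simp only [Fintype.card_fin]
  rw [show (((2:ℕ):ℝ) / 2 + 1 : ℝ) = 2 by norm_num, Real.Gamma_two, Real.sq_sqrt Real.pi_nonneg,
    div_one, ← ENNReal.ofReal_pow hR, ← ENNReal.ofReal_mul (by positivity), mul_comm]

private lemma regionVol14 (a : ℝ) (ha : 0 ≤ a) (g : ℝ → ℝ) (hg : Continuous g)
    (hg0 : ∀ t, 0 ≤ g t) :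
    volume {p : ℝ × (Fin 2 → ℝ) | |p.1| ≤ a ∧ (p.2 0)^2 + (p.2 1)^2 ≤ g p.1 ^ 2}
      = ENNReal.ofReal (∫ t in (-a)..a, π * g t ^ 2) := by
  have hM : MeasurableSet {p : ℝ × (Fin 2 → ℝ) | |p.1| ≤ a ∧ (p.2 0)^2 + (p.2 1)^2 ≤ g p.1 ^ 2} := by
    have h1 : MeasurableSet {p : ℝ × (Fin 2 → ℝ) | |p.1| ≤ a} :=
      measurableSet_le (by fun_prop) measurable_const
    have h2 : MeasurableSet {p : ℝ × (Fin 2 → ℝ) | (p.2 0)^2 + (p.2 1)^2 ≤ g p.1 ^ 2} :=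
      measurableSet_le (by fun_prop) (by fun_prop)
    exact (h1.inter h2)
  rw [Measure.volume_eq_prod, Measure.prod_apply hM]
  have hslice : (fun t => volume (Prod.mk t ⁻¹' {p : ℝ × (Fin 2 → ℝ) | |p.1| ≤ a ∧ (p.2 0)^2 + (p.2 1)^2 ≤ g p.1 ^ 2}))
      = Set.indicator (Set.Icc (-a) a) (fun t => ENNReal.ofReal (π * g t ^ 2)) := by
    funext t
    by_cases ht : |t| ≤ a
    · have ht' : t ∈ Set.Icc (-a) a := abs_le.mp ht |> fun h => ⟨h.1, h.2⟩
      rw [Set.indicator_of_mem ht']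
      have : Prod.mk t ⁻¹' {p : ℝ × (Fin 2 → ℝ) | |p.1| ≤ a ∧ (p.2 0)^2 + (p.2 1)^2 ≤ g p.1 ^ 2}
          = {u : Fin 2 → ℝ | (u 0)^2 + (u 1)^2 ≤ (g t)^2} := by
        ext u; simp [ht]
      rw [this, sliceVol14 (g t) (hg0 t)]
    · have ht' : t ∉ Set.Icc (-a) a := fun h => ht (abs_le.mpr ⟨h.1, h.2⟩)
      rw [Set.indicator_of_notMem ht']
      have : Prod.mk t ⁻¹' {p : ℝ × (Fin 2 → ℝ) | |p.1| ≤ a ∧ (p.2 0)^2 + (p.2 1)^2 ≤ g p.1 ^ 2} = ∅ := by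
        ext u; simp [ht]
      simp [this]
  rw [hslice, lintegral_indicator measurableSet_Icc _]
  have hint : IntegrableOn (fun t => π * g t ^ 2) (Set.Icc (-a) a) volume :=
    (Continuous.integrableOn_Icc (by fun_prop))
  rw [← ofReal_integral_eq_lintegral_ofReal hint
    (Filter.Eventually.of_forall fun t => by positivity)]
  rw [intervalIntegral.integral_of_le (by linarith), ← integral_Icc_eq_integral_Ioc]

private lemma normsq14 (y : E3) : ‖y‖^2 = (y 0)^2 + (y 1)^2 + (y 2)^2 := by
  rw [EuclideanSpace.norm_eq, Real.sq_sqrt (by positivity)]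
  simp [Fin.sum_univ_three, sq_abs]

private lemma le_of_sq_le_sq14 {x z : ℝ} (h : x^2 ≤ z^2) (hz : 0 ≤ z) : x ≤ z := by
  have h2 := Real.sqrt_le_sqrt h
  rw [Real.sqrt_sq_eq_abs, Real.sqrt_sq hz] at h2
  exact (le_abs_self x).trans h2

private lemma mem_ball14 {ρ : ℝ} (hρ : 0 < ρ) (y : E3) :
    y ∈ closedBall (0:E3) ρ ↔ |y 2| ≤ ρ ∧ (y 0)^2 + (y 1)^2 ≤ √(ρ^2 - (y 2)^2) ^ 2 := by
  rw [mem_closedBall, dist_zero_right]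
  constructor
  · intro h
    have h2 : ‖y‖^2 ≤ ρ^2 := by nlinarith [norm_nonneg y]
    rw [normsq14] at h2
    have habs : |y 2| ≤ ρ := abs_le.mpr (by constructor <;> nlinarith)
    refine ⟨habs, ?_⟩
    rw [Real.sq_sqrt (by nlinarith [sq_abs (y 2), abs_nonneg (y 2)])]
    linarith
  · rintro ⟨h1, h2⟩
    rw [Real.sq_sqrt (by nlinarith [sq_abs (y 2), abs_nonneg (y 2)])] at h2
    have : ‖y‖^2 ≤ ρ^2 := by rw [normsq14]; nlinarith [sq_abs (y 2)]
    nlinarith [norm_nonneg y]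

private lemma mem_sum14 {ρ r : ℝ} (hρ : 0 < ρ) (hr : 0 < r) (y : E3) :
    y ∈ closedBall (0:E3) ρ + {b : E3 | ‖b‖ ≤ r ∧ b 2 = 0} ↔
      |y 2| ≤ ρ ∧ (y 0)^2 + (y 1)^2 ≤ (√(ρ^2 - (y 2)^2) + r) ^ 2 := by
  rw [Set.mem_add]
  constructor
  · rintro ⟨a, ha, b, ⟨hbr, hb2⟩, rfl⟩
    rw [mem_closedBall, dist_zero_right] at ha
    have hasq : (a 0)^2 + (a 1)^2 + (a 2)^2 ≤ ρ^2 := by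
      rw [← normsq14]; nlinarith [norm_nonneg a]
    have hbsq : (b 0)^2 + (b 1)^2 ≤ r^2 := by
      have := normsq14 b; rw [hb2] at this; nlinarith [norm_nonneg b]
    have hy : ∀ i, (a + b) i = a i + b i := fun i => rfl
    simp only [hy, hb2, add_zero]
    have habs : |a 2| ≤ ρ := abs_le.mpr (by constructor <;> nlinarith)
    refine ⟨habs, ?_⟩
    set A := √((a 0)^2 + (a 1)^2) with hA
    set B := √((b 0)^2 + (b 1)^2) with hB
    have hA2 : A^2 = (a 0)^2 + (a 1)^2 := Real.sq_sqrt (by positivity)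
    have hB2 : B^2 = (b 0)^2 + (b 1)^2 := Real.sq_sqrt (by positivity)
    have hA0 : 0 ≤ A := Real.sqrt_nonneg _
    have hB0 : 0 ≤ B := Real.sqrt_nonneg _
    have hcs : a 0 * b 0 + a 1 * b 1 ≤ A * B := by
      apply le_of_sq_le_sq14 _ (by positivity)
      nlinarith [sq_nonneg (a 0 * b 1 - a 1 * b 0)]
    have hAh : A ≤ √(ρ^2 - (a 2)^2) := by
      rw [hA]; exact Real.sqrt_le_sqrt (by nlinarith)
    have hBr : B ≤ r := le_of_sq_le_sq14 (by nlinarith) hr.le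
    have hh0 : 0 ≤ √(ρ^2 - (a 2)^2) := Real.sqrt_nonneg _
    nlinarith
  · rintro ⟨h1, h2⟩
    have hsub : 0 ≤ ρ^2 - (y 2)^2 := by nlinarith [sq_abs (y 2), abs_nonneg (y 2)]
    set h := √(ρ^2 - (y 2)^2) with hh_def
    have hh2 : h^2 = ρ^2 - (y 2)^2 := Real.sq_sqrt hsub
    have hh0 : 0 ≤ h := Real.sqrt_nonneg _
    set s := √((y 0)^2 + (y 1)^2) with hs_def
    have hs2 : s^2 = (y 0)^2 + (y 1)^2 := Real.sq_sqrt (by positivity)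
    have hs0 : 0 ≤ s := Real.sqrt_nonneg _
    have hs_le : s ≤ h + r := le_of_sq_le_sq14 (by nlinarith) (by positivity)
    by_cases hcase : s ≤ h
    · refine ⟨y, ?_, 0, ⟨by rw [norm_zero]; exact hr.le, rfl⟩, add_zero y⟩
      rw [mem_closedBall, dist_zero_right]
      apply le_of_sq_le_sq14 _ hρ.le
      rw [normsq14]; nlinarith
    · have hs_pos : 0 < s := lt_of_le_of_lt hh0 (not_le.mp hcase)
      set c := h / s with hc_def
      have hcs : c * s = h := div_mul_cancel₀ h hs_pos.ne'
      set b : E3 := (1 - c) • (y - (y 2) • EuclideanSpace.single (2 : Fin 3) (1:ℝ)) with hb_def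
      have hb0 : b 0 = (1 - c) * y 0 := by
        simp [hb_def, EuclideanSpace.single_apply]
      have hb1 : b 1 = (1 - c) * y 1 := by
        simp [hb_def, EuclideanSpace.single_apply]
      have hb2 : b 2 = 0 := by
        simp [hb_def, EuclideanSpace.single_apply]
      refine ⟨y - b, ?_, b, ⟨?_, hb2⟩, by abel⟩
      · rw [mem_closedBall, dist_zero_right]
        apply le_of_sq_le_sq14 _ hρ.le
        have e0 : (y - b) 0 = c * y 0 := by rw [show (y-b) 0 = y 0 - b 0 from rfl, hb0]; ring
        have e1 : (y - b) 1 = c * y 1 := by rw [show (y-b) 1 = y 1 - b 1 from rfl, hb1]; ring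
        have e2 : (y - b) 2 = y 2 := by rw [show (y-b) 2 = y 2 - b 2 from rfl, hb2]; ring
        rw [normsq14, e0, e1, e2]
        have : c^2 * s^2 = h^2 := by rw [← hcs]; ring
        nlinarith
      · apply le_of_sq_le_sq14 _ hr.le
        rw [normsq14, hb0, hb1, hb2]
        have hsh : s - h ≤ r := by linarith
        have hsh0 : 0 ≤ s - h := by linarith [not_le.mp hcase]
        have : (1-c)^2 * s^2 = (s - h)^2 := by
          have : (1-c) * s = s - h := by rw [sub_mul, one_mul, hcs]
          nlinarith [this]
        nlinarith

private lemma exists_adapted_basis14 (L : Submodule ℝ E3) (hL : finrank ℝ L = 2) :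
    ∃ b : OrthonormalBasis (Fin 3) ℝ E3, ∀ x : E3, (x ∈ L ↔ b.repr x 2 = 0) := by
  have hE : finrank ℝ E3 = 3 := finrank_euclideanSpace_fin
  have hsum := L.finrank_add_finrank_orthogonal
  rw [hE, hL] at hsum
  have hperp : finrank ℝ Lᗮ = 1 := by omega
  haveI : Nontrivial Lᗮ := nontrivial_of_finrank_pos (R := ℝ) (by omega)
  obtain ⟨v, hv⟩ := exists_ne (0 : Lᗮ)
  have hnv : ‖(v : E3)‖ ≠ 0 := by
    simpa [norm_eq_zero, Submodule.coe_eq_zero] using hv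
  set w : E3 := ‖(v : E3)‖⁻¹ • (v : E3) with hw_def
  have hwperp : w ∈ Lᗮ := Lᗮ.smul_mem _ v.2
  have hw1 : ‖w‖ = 1 := by
    rw [hw_def, norm_smul, norm_inv, norm_norm, inv_mul_cancel₀ hnv]
  set uB : OrthonormalBasis (Fin 2) ℝ L := (stdOrthonormalBasis ℝ L).reindex (finCongr hL)
  set V : Fin 3 → E3 := ![uB 0, uB 1, w] with hV_def
  have hinnerLw : ∀ y : L, ⟪(y : E3), w⟫_ℝ = 0 := fun y =>
    (Submodule.mem_orthogonal L w).mp hwperp y y.2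
  have hinnerwL : ∀ y : L, ⟪w, (y : E3)⟫_ℝ = 0 := fun y => by
    rw [real_inner_comm]; exact hinnerLw y
  have huB := uB.orthonormal
  rw [orthonormal_iff_ite] at huB
  have honV : Orthonormal ℝ V := by
    rw [orthonormal_iff_ite]
    intro i j
    fin_cases i <;> fin_cases j
    · rw [if_pos rfl]
      have := huB 0 0
      rw [Submodule.coe_inner] at this
      simpa [hV_def] using this
    · rw [if_neg (by decide)]
      have := huB 0 1
      rw [if_neg (by decide)] at this
      rw [Submodule.coe_inner] at this
      exact this
    · rw [if_neg (by decide)]; exact hinnerLw (uB 0)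
    · rw [if_neg (by decide)]
      have := huB 1 0
      rw [if_neg (by decide)] at this
      rw [Submodule.coe_inner] at this
      exact this
    · rw [if_pos rfl]
      have := huB 1 1
      rw [Submodule.coe_inner] at this
      simpa [hV_def] using this
    · rw [if_neg (by decide)]; exact hinnerLw (uB 1)
    · rw [if_neg (by decide)]; exact hinnerwL (uB 0)
    · rw [if_neg (by decide)]; exact hinnerwL (uB 1)
    · rw [if_pos rfl]
      show ⟪w, w⟫_ℝ = 1
      rw [real_inner_self_eq_norm_sq, hw1]; norm_num
  have hcard : Fintype.card (Fin 3) = finrank ℝ E3 := by rw [hE]; rfl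
  set bas := basisOfLinearIndependentOfCardEqFinrank honV.linearIndependent hcard with hbas_def
  have hcoe : ⇑bas = V := coe_basisOfLinearIndependentOfCardEqFinrank _ _
  set b : OrthonormalBasis (Fin 3) ℝ E3 := bas.toOrthonormalBasis (by rwa [hcoe]) with hb_def
  have hb : ⇑b = V := by rw [hb_def, Basis.coe_toOrthonormalBasis, hcoe]
  have hb0 : b 0 = (uB 0 : E3) := by rw [hb]; rfl
  have hb1 : b 1 = (uB 1 : E3) := by rw [hb]; rfl
  have hb2 : b 2 = w := by rw [hb]; rfl
  refine ⟨b, fun x => ?_⟩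
  constructor
  · intro hx
    rw [OrthonormalBasis.repr_apply_apply, hb2, real_inner_comm]
    exact hinnerLw ⟨x, hx⟩
  · intro h0
    have hx := b.sum_repr x
    rw [Fin.sum_univ_three, h0, zero_smul, add_zero, hb0, hb1] at hx
    rw [← hx]
    exact L.add_mem (L.smul_mem _ (SetLike.coe_mem _)) (L.smul_mem _ (SetLike.coe_mem _))

private lemma int_sqrt14 (ρ : ℝ) (hρ : 0 < ρ) :
    ∫ t in (-ρ)..ρ, √(ρ^2 - t^2) = π * ρ^2 / 2 := by
  have key := intervalIntegral.smul_integral_comp_mul_left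
    (f := fun t => √(ρ^2 - t^2)) (a := -1) (b := 1) ρ
  rw [mul_neg_one, mul_one] at key
  rw [← key]
  have : ∀ x : ℝ, √(ρ^2 - (ρ*x)^2) = ρ * √(1 - x^2) := by
    intro x
    rw [show ρ^2 - (ρ*x)^2 = ρ^2 * (1 - x^2) by ring, Real.sqrt_mul (by positivity),
      Real.sqrt_sq hρ.le]
  simp only [this]
  rw [intervalIntegral.integral_const_mul, integral_sqrt_one_sub_sq]
  simp only [smul_eq_mul]; ring

private lemma int_diff14 (ρ r : ℝ) (hρ : 0 < ρ) (hr : 0 < r) :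
    (∫ t in (-ρ)..ρ, π * (√(ρ^2-t^2)+r)^2) - (∫ t in (-ρ)..ρ, π * (√(ρ^2-t^2))^2)
      = π^2*ρ^2*r + 2*π*ρ*r^2 := by
  have hc1 : Continuous fun t : ℝ => π * (√(ρ^2-t^2)+r)^2 := by fun_prop
  have hc2 : Continuous fun t : ℝ => π * (√(ρ^2-t^2))^2 := by fun_prop
  rw [← intervalIntegral.integral_sub (hc1.intervalIntegrable _ _) (hc2.intervalIntegrable _ _)]
  have : ∀ t : ℝ, π * (√(ρ^2-t^2)+r)^2 - π * (√(ρ^2-t^2))^2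
      = 2*π*r * √(ρ^2-t^2) + π*r^2 := fun t => by ring
  simp only [this]
  rw [intervalIntegral.integral_add
      ((by fun_prop : Continuous fun t : ℝ => 2*π*r * √(ρ^2-t^2)).intervalIntegrable _ _)
      (intervalIntegrable_const),
    intervalIntegral.integral_const_mul, int_sqrt14 ρ hρ, intervalIntegral.integral_const]
  simp only [smul_eq_mul, sub_neg_eq_add]
  ring

theorem stmt14 (L : Submodule ℝ (EuclideanSpace ℝ (Fin 3)))
    (hL : Module.finrank ℝ L = 2) (ρ r : ℝ) (hρ : 0 < ρ) (hr : 0 < r) :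
    volume
        ((ρ • Metric.closedBall (0 : EuclideanSpace ℝ (Fin 3)) 1 +
            r • (Metric.closedBall (0 : EuclideanSpace ℝ (Fin 3)) 1 ∩ (L : Set _))) \
          ρ • Metric.closedBall (0 : EuclideanSpace ℝ (Fin 3)) 1) =
      ENNReal.ofReal (π ^ 2 * ρ ^ 2 * r + 2 * π * ρ * r ^ 2) := by
  -- rewrite the dilates
  have h1 : ρ • closedBall (0:E3) 1 = closedBall (0:E3) ρ := by
    rw [_root_.smul_closedBall _ _ zero_le_one, smul_zero, Real.norm_eq_abs, abs_of_pos hρ, mul_one]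
  have h2 : r • (closedBall (0:E3) 1 ∩ (L : Set E3)) = {y : E3 | ‖y‖ ≤ r ∧ y ∈ L} := by
    ext y
    rw [Set.mem_smul_set_iff_inv_smul_mem₀ hr.ne']
    simp only [Set.mem_inter_iff, mem_closedBall_zero_iff, SetLike.mem_coe, Set.mem_setOf_eq]
    rw [norm_smul, norm_inv, Real.norm_eq_abs, abs_of_pos hr,
      Submodule.smul_mem_iff L (inv_ne_zero hr.ne')]
    constructor
    · rintro ⟨hy1, hy2⟩
      refine ⟨?_, hy2⟩
      calc ‖y‖ = r * (r⁻¹ * ‖y‖) := by field_simp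
      _ ≤ r * 1 := by exact mul_le_mul_of_nonneg_left hy1 hr.le
      _ = r := mul_one r
    · rintro ⟨hy1, hy2⟩
      refine ⟨?_, hy2⟩
      rw [inv_mul_le_iff₀ hr, mul_one]
      exact hy1
  rw [h1, h2]
  -- adapted orthonormal basis
  obtain ⟨b, hbL⟩ := exists_adapted_basis14 L hL
  set f := b.repr with hf_def
  -- the measure preserving map to ℝ × ℝ²
  set F : E3 → ℝ × (Fin 2 → ℝ) :=
    ⇑(MeasurableEquiv.piFinSuccAbove (fun _ : Fin 3 => ℝ) 2) ∘
      ⇑(MeasurableEquiv.toLp 2 (Fin 3 → ℝ)).symm ∘ ⇑f with hF_def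
  have hF : MeasurePreserving F volume volume :=
    (volume_preserving_piFinSuccAbove (fun _ : Fin 3 => ℝ) 2).comp
      ((EuclideanSpace.volume_preserving_symm_measurableEquiv_toLp (Fin 3)).comp
        b.measurePreserving_repr)
  have hFcomp : ∀ x : E3, F x = (f x 2, fun j : Fin 2 => f x ((2 : Fin 3).succAbove j)) :=
    fun x => rfl
  have hF1 : ∀ x : E3, (F x).1 = f x 2 := fun x => rfl
  have hF20 : ∀ x : E3, (F x).2 0 = f x 0 := fun x =>
    congrArg (f x) (show (2 : Fin 3).succAbove 0 = 0 by decide)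
  have hF21 : ∀ x : E3, (F x).2 1 = f x 1 := fun x =>
    congrArg (f x) (show (2 : Fin 3).succAbove 1 = 1 by decide)
  -- the two regions
  set RegS : Set (ℝ × (Fin 2 → ℝ)) :=
    {p | |p.1| ≤ ρ ∧ (p.2 0)^2 + (p.2 1)^2 ≤ (√(ρ^2 - p.1^2) + r)^2} with hRegS_def
  set RegB : Set (ℝ × (Fin 2 → ℝ)) :=
    {p | |p.1| ≤ ρ ∧ (p.2 0)^2 + (p.2 1)^2 ≤ (√(ρ^2 - p.1^2))^2} with hRegB_def
  have hRegSm : MeasurableSet RegS := by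
    rw [hRegS_def, Set.setOf_and]
    exact ((isClosed_le (by fun_prop) continuous_const).inter
      (isClosed_le (by fun_prop) (by fun_prop))).measurableSet
  have hRegBm : MeasurableSet RegB := by
    rw [hRegB_def, Set.setOf_and]
    exact ((isClosed_le (by fun_prop) continuous_const).inter
      (isClosed_le (by fun_prop) (by fun_prop))).measurableSet
  -- transfer of the sum set
  have hSeq : closedBall (0:E3) ρ + {y : E3 | ‖y‖ ≤ r ∧ y ∈ L} = F ⁻¹' RegS := by
    ext x
    rw [Set.mem_preimage]
    have hx1 : x ∈ closedBall (0:E3) ρ + {y : E3 | ‖y‖ ≤ r ∧ y ∈ L} ↔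
        f x ∈ closedBall (0:E3) ρ + {c : E3 | ‖c‖ ≤ r ∧ c 2 = 0} := by
      rw [Set.mem_add, Set.mem_add]
      constructor
      · rintro ⟨a, ha, c, ⟨hc1, hc2⟩, rfl⟩
        refine ⟨f a, ?_, f c, ⟨?_, ?_⟩, ?_⟩
        · rwa [mem_closedBall_zero_iff, f.norm_map, ← mem_closedBall_zero_iff]
        · rwa [f.norm_map]
        · exact (hbL c).mp hc2
        · rw [← map_add]
      · rintro ⟨a', ha', c', ⟨hc1, hc2⟩, hsum⟩
        refine ⟨f.symm a', ?_, f.symm c', ⟨?_, ?_⟩, ?_⟩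
        · rwa [mem_closedBall_zero_iff, f.symm.norm_map, ← mem_closedBall_zero_iff]
        · rwa [f.symm.norm_map]
        · rw [hbL]
          rw [LinearIsometryEquiv.apply_symm_apply]
          exact hc2
        · rw [← map_add, hsum, LinearIsometryEquiv.symm_apply_apply]
    rw [hx1, mem_sum14 hρ hr (f x)]
    show _ ↔ |(F x).1| ≤ ρ ∧ ((F x).2 0)^2 + ((F x).2 1)^2 ≤ (√(ρ^2 - (F x).1^2) + r)^2
    rw [hF1, hF20, hF21]
  -- transfer of the ball
  have hBeq : closedBall (0:E3) ρ = F ⁻¹' RegB := by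
    ext x
    rw [Set.mem_preimage]
    have hx1 : x ∈ closedBall (0:E3) ρ ↔ f x ∈ closedBall (0:E3) ρ := by
      rw [mem_closedBall_zero_iff, mem_closedBall_zero_iff, f.norm_map]
    rw [hx1, mem_ball14 hρ (f x)]
    show _ ↔ |(F x).1| ≤ ρ ∧ ((F x).2 0)^2 + ((F x).2 1)^2 ≤ (√(ρ^2 - (F x).1^2))^2
    rw [hF1, hF20, hF21]
  rw [hSeq, hBeq, ← Set.preimage_diff,
    hF.measure_preimage (hRegSm.diff hRegBm).nullMeasurableSet]
  -- subset relation of regions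
  have hsub : RegB ⊆ RegS := by
    rintro p ⟨hp1, hp2⟩
    refine ⟨hp1, le_trans hp2 ?_⟩
    nlinarith [Real.sqrt_nonneg (ρ^2 - p.1^2), hr.le]
  -- volumes of regions
  have hgS : Continuous fun t : ℝ => √(ρ^2 - t^2) + r := by fun_prop
  have hgB : Continuous fun t : ℝ => √(ρ^2 - t^2) := by fun_prop
  have hvS : volume RegS = ENNReal.ofReal (∫ t in (-ρ)..ρ, π * (√(ρ^2 - t^2) + r)^2) :=
    regionVol14 ρ hρ.le _ hgS fun t => by positivity
  have hvB : volume RegB = ENNReal.ofReal (∫ t in (-ρ)..ρ, π * (√(ρ^2 - t^2))^2) :=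
    regionVol14 ρ hρ.le _ hgB fun t => Real.sqrt_nonneg _
  have hIB_nonneg : 0 ≤ ∫ t in (-ρ)..ρ, π * (√(ρ^2 - t^2))^2 :=
    intervalIntegral.integral_nonneg (by linarith) fun t _ => by positivity
  rw [measure_diff hsub hRegBm.nullMeasurableSet (by rw [hvB]; exact ENNReal.ofReal_ne_top),
    hvS, hvB, ← ENNReal.ofReal_sub _ hIB_nonneg, int_diff14 ρ r hρ hr]
end

section
/- Let A ⊂ ℝⁿ be measurable and Q ⊂ ℝⁿ nonempty compact convex of dimension n. Then λₙ((\underline{A} ⊕ int Q) \ A) ≤ λₙ({x ∈ Aᶜ : λₙ(A ∩ (x − Q)) > 0}) ≤ λₙ((\underline{A} ⊕ Q) \ A), where \underline{A} = (A⁰)ᶜ is the set of points at which A does not have Lebesgue density zero. -/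
open Pointwise MeasureTheory

/-- The set of points where `A` has Lebesgue density zero. -/
def densityZero {n : ℕ} (A : Set (EuclideanSpace ℝ (Fin n))) :
    Set (EuclideanSpace ℝ (Fin n)) :=
  {x | Filter.Tendsto
        (fun r : ℝ => volume (A ∩ Metric.closedBall x r) / volume (Metric.closedBall x r))
        (nhdsWithin 0 (Set.Ioi 0)) (nhds 0)}

theorem stmt16 {n : ℕ} (A Q : Set (EuclideanSpace ℝ (Fin n)))
    (hA : MeasurableSet A) (hQ : IsCompact Q) (hQconv : Convex ℝ Q)
    (hQfull : (interior Q).Nonempty) :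
    volume (((densityZero A)ᶜ + interior Q) \ A) ≤
        volume {x | x ∈ Aᶜ ∧ 0 < volume (A ∩ ({x} - Q))} ∧
      volume {x | x ∈ Aᶜ ∧ 0 < volume (A ∩ ({x} - Q))} ≤
        volume (((densityZero A)ᶜ + Q) \ A) := by
  constructor
  · apply measure_mono
    rintro x ⟨hx, hxA⟩
    obtain ⟨a, ha, q, hq, rfl⟩ := Set.mem_add.1 hx
    refine ⟨hxA, ?_⟩
    set x := a + q with hxdef
    have haopen : a ∈ ({x} : Set _) - interior Q :=
      ⟨x, rfl, q, hq, show x - q = a by rw [hxdef]; abel⟩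
    have hopen : IsOpen (({x} : Set _) - interior Q) :=
      IsOpen.sub_left isOpen_interior
    obtain ⟨r, hr, hball⟩ := Metric.isOpen_iff.1 hopen a haopen
    by_contra hcon
    push_neg at hcon
    have h0 : volume (A ∩ ({x} - Q)) = 0 := le_antisymm hcon zero_le
    have hsub : Metric.closedBall a (r / 2) ⊆ ({x} : Set _) - Q := by
      refine fun y hy => ?_
      have : y ∈ ({x} : Set _) - interior Q :=
        hball ((Metric.closedBall_subset_ball (by linarith)) hy)
      obtain ⟨u, hu, v, hv, huv⟩ := this
      exact ⟨u, hu, v, interior_subset hv, huv⟩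
    have hz : volume (A ∩ Metric.closedBall a (r / 2)) = 0 :=
      measure_mono_null (Set.inter_subset_inter_right _ hsub) h0
    apply ha
    have hev : (fun s : ℝ => volume (A ∩ Metric.closedBall a s) /
        volume (Metric.closedBall a s)) =ᶠ[nhdsWithin 0 (Set.Ioi 0)] fun _ => 0 := by
      filter_upwards [Ioc_mem_nhdsGT_of_mem (show (0:ℝ) ∈ Set.Ico (0:ℝ) (r/2) from Set.left_mem_Ico.2 (by linarith))] with s hs
      have : volume (A ∩ Metric.closedBall a s) = 0 :=
        measure_mono_null (Set.inter_subset_inter_right _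
          (Metric.closedBall_subset_closedBall hs.2)) hz
      simp [this]
    exact Filter.Tendsto.congr' hev.symm tendsto_const_nhds
  · apply measure_mono
    rintro x ⟨hxA, hpos⟩
    have hdens := Besicovitch.ae_tendsto_measure_inter_div volume A
    rw [Filter.eventually_iff, mem_ae_iff, Set.compl_setOf,
      Measure.restrict_apply' hA] at hdens
    have hne : (A ∩ ({x} - Q) ∩ {y | Filter.Tendsto
        (fun r : ℝ => volume (A ∩ Metric.closedBall y r) / volume (Metric.closedBall y r))
        (nhdsWithin 0 (Set.Ioi 0)) (nhds 1)}).Nonempty := by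
      rw [Set.nonempty_iff_ne_empty]
      intro hempty
      have hsub : A ∩ ({x} - Q) ⊆
          {y | ¬ Filter.Tendsto
            (fun r : ℝ => volume (A ∩ Metric.closedBall y r) / volume (Metric.closedBall y r))
            (nhdsWithin 0 (Set.Ioi 0)) (nhds 1)} ∩ A := by
        intro y hy
        refine ⟨fun ht => ?_, hy.1⟩
        exact Set.eq_empty_iff_forall_notMem.1 hempty y ⟨hy, ht⟩
      exact absurd (le_antisymm ((measure_mono hsub).trans (le_of_eq hdens)) zero_le)
        (ne_of_gt hpos)
    obtain ⟨a, ⟨haA, haQ⟩, hat⟩ := hne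
    obtain ⟨u, hu, v, hv, huv⟩ := haQ
    rw [Set.mem_singleton_iff] at hu
    refine ⟨Set.mem_add.2 ⟨a, ?_, v, hv, by rw [← huv, hu]; module⟩, hxA⟩
    intro hzero
    have := tendsto_nhds_unique hzero hat
    simp at this
end
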